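/- arXiv:2506.16789 — 2 statements merged into one kernel-verified Lean document; each statement's English description precedes it below -/
import Mathlib

section
/- A finite simple graph Γ is isomorphic to a double D(Γ') for some graph Γ' if and only if Γ admits a fixed-point-free involution that preserves each twin module (i.e., an involutive graph automorphism σ with σ(v) ≠ v and lk(σ(v)) = lk(v) for all vertices v). -/
/-- The double of a graph: vertex set `V × Bool`, with `(v,ε)` adjacent to `(w,δ)`
iff `v` and `w` are adjacent. -/
def GraphDouble {V : Type*} (G : SimpleGraph V) : SimpleGraph (V × Bool) where
  Adj p q := G.Adj p.1 q.1
  symm := ⟨fun _ _ h => G.adj_symm h⟩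
  loopless := ⟨fun p h => G.irrefl h⟩

/-- A finite simple graph is isomorphic to a double iff it admits a fixed-point-free
involutive automorphism preserving each twin module (i.e. `lk (σ v) = lk v`). -/
theorem stmt1 {V : Type*} [Fintype V] (G : SimpleGraph V) :
    (∃ (W : Type) (G' : SimpleGraph W), Nonempty (G ≃g GraphDouble G')) ↔
      ∃ σ : G ≃g G, (∀ v : V, σ (σ v) = v) ∧ (∀ v : V, σ v ≠ v) ∧
        (∀ v : V, G.neighborSet (σ v) = G.neighborSet v) := by
  classical
  constructor
  · rintro ⟨W, G', ⟨e⟩⟩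
    let sw : GraphDouble G' ≃g GraphDouble G' :=
      { toFun := fun p => (p.1, !p.2)
        invFun := fun p => (p.1, !p.2)
        left_inv := fun p => by simp
        right_inv := fun p => by simp
        map_rel_iff' := Iff.rfl }
    refine ⟨e.trans (sw.trans e.symm), ?_, ?_, ?_⟩
    · intro v
      show e.symm (sw (e (e.symm (sw (e v))))) = v
      rw [e.apply_symm_apply]
      show e.symm ((e v).1, !!(e v).2) = v
      simp
    · intro v h
      have h' : e.symm (sw (e v)) = e.symm (e v) := by
        rw [RelIso.symm_apply_apply]; exact h
      have h2 : sw (e v) = e v := e.toEquiv.symm.injective h'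
      exact absurd (congrArg Prod.snd h2) (Bool.not_ne_self _)
    · intro v
      ext w
      show G.Adj (e.symm (sw (e v))) w ↔ G.Adj v w
      rw [← e.map_rel_iff, ← e.map_rel_iff (a := v)]
      rw [e.apply_symm_apply]
      exact Iff.rfl
  · rintro ⟨σ, hinv, hfix, hlk⟩
    have adjL : ∀ v w, G.Adj (σ v) w ↔ G.Adj v w := fun v w => by
      have := Set.ext_iff.mp (hlk v) w
      simpa [SimpleGraph.mem_neighborSet] using this
    have adjR : ∀ v w, G.Adj v (σ w) ↔ G.Adj v w := fun v w => by
      rw [SimpleGraph.adj_comm, adjL, SimpleGraph.adj_comm]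
    let s : Setoid V := ⟨fun v w => w = v ∨ w = σ v, by
      constructor
      · exact fun v => Or.inl rfl
      · rintro v w (rfl | rfl)
        · exact Or.inl rfl
        · exact Or.inr (hinv v).symm
      · rintro v w u (rfl | rfl) (rfl | rfl)
        · exact Or.inl rfl
        · exact Or.inr rfl
        · exact Or.inr rfl
        · exact Or.inl (hinv v)⟩
    let G' : SimpleGraph (Quotient s) :=
      { Adj := Quotient.lift₂ (fun v w => G.Adj v w) (by
          rintro a₁ a₂ b₁ b₂ (rfl | rfl) (rfl | rfl) <;>
            simp only [adjL, adjR])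
        symm := by
          refine ⟨?_⟩
          rintro ⟨v⟩ ⟨w⟩ h
          exact G.adj_symm h
        loopless := by
          refine ⟨?_⟩
          rintro ⟨v⟩ h
          exact G.irrefl h }
    have hmkσ : ∀ v : V, (Quotient.mk s (σ v)) = Quotient.mk s v := fun v =>
      Quotient.sound (Or.inr (hinv v).symm)
    have hout : ∀ q : Quotient s, Quotient.mk s q.out = q := fun q => q.out_eq
    let g : V → Quotient s × Bool := fun v =>
      (Quotient.mk s v, if v = (Quotient.mk s v).out then false else true)
    let f : Quotient s × Bool → V := fun p => if p.2 then σ p.1.out else p.1.out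
    have left_inv : Function.LeftInverse f g := by
      intro v
      by_cases h : v = (Quotient.mk s v).out
      · rw [show g v = (Quotient.mk s v, false) from by simp only [g, if_pos h]]
        show (Quotient.mk s v).out = v
        exact h.symm
      · have hex : v = (Quotient.mk s v).out ∨ v = σ (Quotient.mk s v).out :=
          Quotient.exact (hout (Quotient.mk s v))
        have hv : v = σ (Quotient.mk s v).out := hex.resolve_left h
        rw [show g v = (Quotient.mk s v, true) from by simp only [g, if_neg h]]
        show σ (Quotient.mk s v).out = v
        exact hv.symm
    have right_inv : Function.RightInverse f g := by
      rintro ⟨q, b⟩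
      cases b
      · show g q.out = (q, false)
        simp only [g, hout q]
        simp
      · show g (σ q.out) = (q, true)
        have h1 : Quotient.mk s (σ q.out) = q := by rw [hmkσ, hout]
        simp only [g, h1]
        rw [if_neg (hfix q.out)]
    haveI : Fintype (Quotient s) := Quotient.fintype s
    let q : Quotient s ≃ Fin (Fintype.card (Quotient s)) := Fintype.equivFin _
    refine ⟨Fin (Fintype.card (Quotient s)), G'.comap q.symm, ⟨?_⟩⟩
    refine ⟨(Equiv.mk g f left_inv right_inv).trans (q.prodCongr (Equiv.refl Bool)), ?_⟩
    intro a b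
    show (G'.comap q.symm).Adj (q (Quotient.mk s a)) (q (Quotient.mk s b)) ↔ G.Adj a b
    simp only [SimpleGraph.comap_adj, Equiv.symm_apply_apply]
    exact Iff.rfl
end

section
/- Let Γ be an incomplete triangle-free graph that is connected without cut vertices, and let v be a vertex. If w ∈ lk(v), then the twin module of the (single) vertex (w,0) in the link double D°_v(Γ) is exactly M_Γ(w)×{0}, where M_Γ(w) is the twin module of w in Γ. -/
/-- The link double `D°_v(Γ)`: two copies of `Γ` identified along `lk(v)` (represented by
the copies `(w, false)` for `w ∈ lk(v)`), with both copies of `v` removed. -/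
def LinkDouble {V : Type*} (G : SimpleGraph V) (v : V) :
    SimpleGraph {p : V × Bool // p.1 ≠ v ∧ (G.Adj v p.1 → p.2 = false)} where
  Adj p q := G.Adj p.1.1 q.1.1 ∧ (p.1.2 = q.1.2 ∨ G.Adj v p.1.1 ∨ G.Adj v q.1.1)
  symm := by
    constructor
    rintro p q ⟨h1, h2⟩
    refine ⟨h1.symm, ?_⟩
    rcases h2 with h | h | h
    · exact Or.inl h.symm
    · exact Or.inr (Or.inr h)
    · exact Or.inr (Or.inl h)
  loopless := ⟨fun p h => G.loopless.irrefl p.1.1 h.1⟩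

/-- Let `Γ` be an incomplete triangle-free graph, connected without cut vertices, and let
`w ∈ lk(v)`. Then the twin module of the (single) vertex `(w,0)` in `D°_v(Γ)` is exactly
`M_Γ(w) × {0}`. -/
theorem stmt11 {V : Type*} [Fintype V] (G : SimpleGraph V)
    (hinc : ∃ x y : V, x ≠ y ∧ ¬ G.Adj x y)
    (htf : G.CliqueFree 3)
    (hconn : G.Connected)
    (hnocut : ∀ u : V, (G.induce {x : V | x ≠ u}).Connected)
    (v w : V) (hw : G.Adj v w) :
    ∀ p : {p : V × Bool // p.1 ≠ v ∧ (G.Adj v p.1 → p.2 = false)}, p.1.1 = w →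
      ∀ q : {p : V × Bool // p.1 ≠ v ∧ (G.Adj v p.1 → p.2 = false)},
        ((LinkDouble G v).neighborSet q = (LinkDouble G v).neighborSet p ↔
          (G.neighborSet q.1.1 = G.neighborSet w ∧ q.1.2 = false)) := by
  classical
  -- there exists a third vertex z ∉ {v, w}
  have hz : ∃ z, z ≠ v ∧ z ≠ w := by
    by_contra hcon
    push_neg at hcon
    obtain ⟨a, b0, hab, hnab⟩ := hinc
    rcases eq_or_ne a v with ha | ha
    · rcases eq_or_ne b0 v with hb | hb
      · exact hab (ha.trans hb.symm)
      · have hbw := hcon b0 hb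
        exact hnab (ha ▸ hbw ▸ hw)
    · have haw := hcon a ha
      rcases eq_or_ne b0 v with hb | hb
      · exact hnab (haw ▸ hb ▸ hw.symm)
      · have hbw := hcon b0 hb
        exact hab (haw.trans hbw.symm)
  -- w has a neighbor x ≠ v
  have hx : ∃ x, x ≠ v ∧ G.Adj w x := by
    obtain ⟨z, hzv, hzw⟩ := hz
    have hc := (hnocut v).preconnected
    have hr : (G.induce {x : V | x ≠ v}).Reachable ⟨w, hw.ne'⟩ ⟨z, hzv⟩ := hc _ _
    obtain ⟨pth⟩ := hr
    cases pth with
    | nil => exact absurd rfl hzw.symm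
    | cons h _ =>
      rename_i y _
      exact ⟨y.1, y.2, h⟩
  obtain ⟨x, hxv, hwx⟩ := hx
  have hvx : ¬ G.Adj v x := by
    intro hvx
    exact htf {v, w, x} (SimpleGraph.is3Clique_triple_iff.2 ⟨hw, hvx, hwx⟩)
  intro p hp q
  have hpv : G.Adj v p.1.1 := hp ▸ hw
  have hpb : p.1.2 = false := p.2.2 hpv
  constructor
  · intro hset
    have hmem : ∀ r, (LinkDouble G v).Adj q r ↔ (LinkDouble G v).Adj p r := by
      intro r
      rw [← SimpleGraph.mem_neighborSet, ← SimpleGraph.mem_neighborSet, hset]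
    -- first: G.Adj v q.1.1
    have hvu : G.Adj v q.1.1 := by
      by_contra hvu
      have h0 := (hmem ⟨(x, false), hxv, fun _ => rfl⟩).2
        ⟨by rw [hp]; exact hwx, Or.inr (Or.inl hpv)⟩
      have h1 := (hmem ⟨(x, true), hxv, fun h => absurd h hvx⟩).2
        ⟨by rw [hp]; exact hwx, Or.inr (Or.inl hpv)⟩
      rcases h0.2 with hc0 | hc | hc
      · rcases h1.2 with hc1 | hc | hc
        · rw [hc0] at hc1; exact Bool.false_ne_true hc1
        · exact hvu hc
        · exact hvx hc
      · exact hvu hc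
      · exact hvx hc
    have hcb : q.1.2 = false := q.2.2 hvu
    refine ⟨?_, hcb⟩
    ext y
    simp only [SimpleGraph.mem_neighborSet]
    by_cases hyv : y = v
    · subst hyv
      exact ⟨fun _ => hw.symm, fun _ => hvu.symm⟩
    · have hiff := hmem ⟨(y, false), hyv, fun _ => rfl⟩
      constructor
      · intro hqy
        have := (hiff.1 ⟨hqy, Or.inr (Or.inl hvu)⟩).1
        rwa [hp] at this
      · intro hwy
        exact (hiff.2 ⟨by rw [hp]; exact hwy, Or.inr (Or.inl hpv)⟩).1
  · rintro ⟨hlk, hcb⟩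
    have hadj : ∀ y, G.Adj q.1.1 y ↔ G.Adj w y := by
      intro y
      rw [← SimpleGraph.mem_neighborSet, ← SimpleGraph.mem_neighborSet, hlk]
    have hvu : G.Adj v q.1.1 := ((hadj v).2 hw.symm).symm
    ext r
    simp only [SimpleGraph.mem_neighborSet]
    constructor
    · rintro ⟨h1, -⟩
      exact ⟨by rw [hp]; exact (hadj _).1 h1, Or.inr (Or.inl hpv)⟩
    · rintro ⟨h1, -⟩
      refine ⟨(hadj _).2 ?_, Or.inr (Or.inl hvu)⟩
      rwa [hp] at h1
end
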